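/- Let k be a field, p ≥ 2, n ≥ p, and keep the notation of the blow-up chart: R = k[x_1,…,x_n], S = k[y_1,…,y_{p−1}, x_p,…,x_n] with φ : R → S, φ(x_i) = y_i x_p for i < p, φ(x_i) = x_i for i ≥ p. Then the image of the S-module map S ⊗_R M → S^n (induced by the inclusion M ⊆ R^n and base change along φ) is the free S-submodule generated by x_p e_j for 1 ≤ j ≤ p and e_k for p < k ≤ n, where M ⊆ R^n is the submodule generated by x_i e_j (i, j ≤ p) and e_k (k > p). -/

import Mathlib

open MvPolynomial TensorProduct

set_option maxHeartbeats 1000000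
set_option synthInstance.maxHeartbeats 400000

variable (k : Type*) [Field k] (n p : ℕ)

/-- R = k[x₁,…,x_n] (variables indexed by `Fin n`; the 1-indexed variable x_i of
the statement is the variable with index i - 1). -/
abbrev R := MvPolynomial (Fin n) k

/-- S = k[y₁,…,y_{p-1}, x_p,…,x_n]: a polynomial ring whose variables are indexed
by `Fin (p-1) ⊕ Fin (n-p+1)`, the variable `Sum.inl i` being y_{i+1} and the
variable `Sum.inr l` being x_{p+l}. -/
abbrev S := MvPolynomial (Fin (p - 1) ⊕ Fin (n - p + 1)) k

/-- The variable x_p of S. -/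
noncomputable def xp : S k n p := X (Sum.inr ⟨0, by omega⟩)

/-- The k-algebra map φ : R → S of the blow-up chart, with φ(x_i) = y_i x_p for
i < p and φ(x_i) = x_i for i ≥ p. -/
noncomputable def phi (hp : 2 ≤ p) (hpn : p ≤ n) : R k n →+* S k n p :=
  (aeval fun i : Fin n =>
    if h : (i : ℕ) < p - 1 then X (Sum.inl ⟨i, h⟩) * xp k n p
    else X (Sum.inr ⟨(i : ℕ) - (p - 1), by omega⟩)).toRingHom

/-- The submodule M ⊆ R^n generated by the m_{i,j} = x_i e_j (i, j ≤ p) and the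
e_k (k > p). -/
noncomputable def M : Submodule (R k n) (Fin n → R k n) :=
  Submodule.span (R k n)
    ({v | ∃ i j : Fin n, (i : ℕ) < p ∧ (j : ℕ) < p ∧ v = Pi.single j (X i)} ∪
     {v | ∃ l : Fin n, p ≤ (l : ℕ) ∧ v = Pi.single l 1})

/-- The image of the S-module map S ⊗_R M → S^n — induced by the inclusion
M ⊆ R^n and base change along the blow-up chart map φ : R → S, identifying
S ⊗_R R^n with S^n — is the free S-submodule of S^n generated by the x_p e_j
(j ≤ p) and the e_k (k > p). -/
theorem image_of_base_change (hp : 2 ≤ p) (hpn : p ≤ n) :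
    letI : Algebra (R k n) (S k n p) := (phi k n p hp hpn).toAlgebra
    let f : (M k n p) →ₗ[R k n] (Fin n → S k n p) :=
      ((Algebra.linearMap (R k n) (S k n p)).compLeft (Fin n)).comp (M k n p).subtype
    let g : Fin n → (Fin n → S k n p) := fun j =>
      if (j : ℕ) < p then Pi.single j (xp k n p) else Pi.single j 1
    LinearMap.range (f.liftBaseChange (S k n p)) = Submodule.span (S k n p) (Set.range g) ∧
      LinearIndependent (S k n p) g := by
  letI : Algebra (R k n) (S k n p) := (phi k n p hp hpn).toAlgebra
  intro f g
  have hxp : xp k n p ≠ 0 := X_ne_zero _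
  have hphiX : ∀ i : Fin n, (i : ℕ) < p →
      algebraMap (R k n) (S k n p) (X i) =
        (if h : (i : ℕ) < p - 1 then X (Sum.inl ⟨i, h⟩) else 1) * xp k n p := by
    intro i hi
    show phi k n p hp hpn (X i) = _
    rw [phi]
    simp only [AlgHom.toRingHom_eq_coe, RingHom.coe_coe, aeval_X]
    split_ifs with h
    · rfl
    · have : (i : ℕ) - (p - 1) = 0 := by omega
      rw [one_mul, xp]
      congr 1
      exact congrArg Sum.inr (Fin.ext this)
  set F : (Fin n → R k n) →ₗ[R k n] (Fin n → S k n p) :=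
    (Algebra.linearMap (R k n) (S k n p)).compLeft (Fin n) with hF
  have hFsingle : ∀ (j : Fin n) (q : R k n),
      F (Pi.single j q) = Pi.single j (algebraMap (R k n) (S k n p) q) := by
    intro j q
    funext i
    exact Pi.apply_single (fun _ => algebraMap (R k n) (S k n p)) (fun _ => map_zero _) j q i
  constructor
  · rw [LinearMap.range_liftBaseChange]
    apply le_antisymm
    · rw [Submodule.span_le]
      rintro _ ⟨⟨m, hm⟩, rfl⟩
      have hfm : f ⟨m, hm⟩ = F m := rfl
      rw [hfm]
      -- reduce to generators
      have : m ∈ Submodule.comap F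
          ((Submodule.span (S k n p) (Set.range g)).restrictScalars (R k n)) := by
        refine (Submodule.span_le.mpr ?_) hm
        rintro v (⟨i, j, hi, hj, rfl⟩ | ⟨l, hl, rfl⟩)
        · rw [SetLike.mem_coe, Submodule.mem_comap, Submodule.restrictScalars_mem]
          rw [hFsingle, hphiX i hi]
          split_ifs with h
          · rw [← smul_eq_mul, Pi.single_smul]
            refine Submodule.smul_mem _ _ (Submodule.subset_span ⟨j, ?_⟩)
            show _ = (Pi.single j (xp k n p) : Fin n → S k n p)
            simp [g, hj]
          · rw [one_mul]
            refine Submodule.subset_span ⟨j, ?_⟩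
            show _ = (Pi.single j (xp k n p) : Fin n → S k n p)
            simp [g, hj]
        · rw [SetLike.mem_coe, Submodule.mem_comap, Submodule.restrictScalars_mem]
          rw [hFsingle, map_one]
          refine Submodule.subset_span ⟨l, ?_⟩
          show _ = Pi.single l 1
          simp [g, not_lt.mpr hl]
      exact this
    · rw [Submodule.span_le]
      rintro _ ⟨j, rfl⟩
      by_cases hj : (j : ℕ) < p
      · have hgen : Pi.single j (X (⟨p - 1, by omega⟩ : Fin n)) ∈ M k n p :=
          Submodule.subset_span (Or.inl ⟨⟨p - 1, by omega⟩, j, by show p - 1 < p; omega, hj, rfl⟩)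
        refine Submodule.subset_span ⟨⟨_, hgen⟩, ?_⟩
        show F (Pi.single j (X (⟨p - 1, by omega⟩ : Fin n))) = g j
        rw [hFsingle, hphiX _ (by show p - 1 < p; omega)]
        rw [dif_neg (by show ¬ (p - 1 < p - 1); omega), one_mul]
        simp [g, hj]
      · have hgen : Pi.single j (1 : R k n) ∈ M k n p :=
          Submodule.subset_span (Or.inr ⟨j, not_lt.mp hj, rfl⟩)
        refine Submodule.subset_span ⟨⟨_, hgen⟩, ?_⟩
        show F (Pi.single j (1 : R k n)) = g j
        rw [hFsingle, map_one]
        simp [g, hj]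
  · rw [Fintype.linearIndependent_iff]
    intro c hc j
    have := congrFun hc j
    simp only [Finset.sum_apply, Pi.smul_apply, Pi.zero_apply, smul_eq_mul] at this
    rw [Finset.sum_eq_single j] at this
    · by_cases hj : (j : ℕ) < p
      · simp only [g, if_pos hj, Pi.single_eq_same] at this
        exact (mul_eq_zero.mp this).resolve_right hxp
      · simpa [g, if_neg hj] using this
    · intro i _ hij
      have : g i j = 0 := by
        by_cases hi : (i : ℕ) < p <;> simp [g, hi, Pi.single_eq_of_ne' hij]
      rw [this, mul_zero]
    · simp
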